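/- (Energy decrement step) Let X be a nonempty finite type, D a distribution on X, g, h : X → [0,1], f : X → [−1,1], and ε > 0, ε' ∈ (0,1]. Suppose h' : X → [0,1] satisfies |h'(x) − clamp(h(x) + ε·f(x))| ≤ ε'/2 for every x ∈ X. Then E_D[(g−h')²] ≤ E_D[(g−h)²] − 2ε·E_D[f·(g−h)] + ε² + 2ε'. -/

import Mathlib

/-- Expectation of `f` under the (finitely supported) distribution `D`. -/
noncomputable def expect {X : Type*} [Fintype X] (D f : X → ℝ) : ℝ := ∑ x, D x * f x

/-- `D` is a probability distribution on the finite type `X`. -/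
def IsDist {X : Type*} [Fintype X] (D : X → ℝ) : Prop := (∀ x, 0 ≤ D x) ∧ ∑ x, D x = 1

/-- Projection of a real number onto the unit interval. -/
noncomputable def clamp (t : ℝ) : ℝ := min 1 (max 0 t)

lemma clamp_mem (t : ℝ) : clamp t ∈ Set.Icc (0:ℝ) 1 := by
  constructor
  · exact le_min one_pos.le (le_max_left 0 t) |>.trans_eq rfl |> (fun _ => le_min zero_le_one (le_max_left 0 t))
  · exact min_le_left 1 _

lemma clamp_sq (a t : ℝ) (ha : a ∈ Set.Icc (0:ℝ) 1) : (a - clamp t)^2 ≤ (a - t)^2 := by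
  obtain ⟨h0, h1⟩ := ha
  unfold clamp
  rcases le_total t 0 with ht | ht
  · rw [max_eq_left ht, min_eq_right zero_le_one]
    nlinarith
  · rw [max_eq_right ht]
    rcases le_total 1 t with ht1 | ht1
    · rw [min_eq_left ht1]; nlinarith
    · rw [min_eq_right ht1]

theorem stmt_5 {X : Type*} [Fintype X] [Nonempty X]
    (D : X → ℝ) (hD : IsDist D)
    (g h : X → ℝ) (hg : ∀ x, g x ∈ Set.Icc (0:ℝ) 1) (hh : ∀ x, h x ∈ Set.Icc (0:ℝ) 1)
    (f : X → ℝ) (hf : ∀ x, f x ∈ Set.Icc (-1:ℝ) 1)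
    (ε ε' : ℝ) (hε : 0 < ε) (hε' : ε' ∈ Set.Ioc (0:ℝ) 1)
    (h' : X → ℝ) (hh' : ∀ x, h' x ∈ Set.Icc (0:ℝ) 1)
    (hclose : ∀ x, |h' x - clamp (h x + ε * f x)| ≤ ε' / 2) :
    expect D (fun x => (g x - h' x) ^ 2) ≤
      expect D (fun x => (g x - h x) ^ 2)
        - 2 * ε * expect D (fun x => f x * (g x - h x)) + ε ^ 2 + 2 * ε' := by
  obtain ⟨hD0, hD1⟩ := hD
  have key : ∀ x, (g x - h' x)^2 ≤ (g x - h x)^2 - 2*ε*(f x*(g x - h x)) + ε^2 + 2*ε' := by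
    intro x
    have hc := clamp_sq (g x) (h x + ε * f x) (hg x)
    have hcm := clamp_mem (h x + ε * f x)
    obtain ⟨hc0, hc1⟩ := hcm
    have habs := abs_le.mp (hclose x)
    obtain ⟨hg0, hg1⟩ := hg x
    obtain ⟨hh0, hh1⟩ := hh' x
    obtain ⟨hf0, hf1⟩ := hf x
    obtain ⟨he0, he1⟩ := hε'
    set c := clamp (h x + ε * f x) with hcdef
    nlinarith [hc,
      mul_nonneg (sq_nonneg ε) (mul_nonneg (by linarith : (0:ℝ) ≤ 1 - f x) (by linarith : (0:ℝ) ≤ 1 + f x)),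
      mul_nonneg (by linarith [habs.2] : (0:ℝ) ≤ ε'/2 - (h' x - c))
        (by linarith : (0:ℝ) ≤ 2 + (2*g x - c - h' x)),
      mul_nonneg (by linarith [habs.1] : (0:ℝ) ≤ ε'/2 + (h' x - c))
        (by linarith : (0:ℝ) ≤ 2 - (2*g x - c - h' x))]
  calc expect D (fun x => (g x - h' x) ^ 2)
      ≤ expect D (fun x => (g x - h x)^2 - 2*ε*(f x*(g x - h x)) + ε^2 + 2*ε') := by
        unfold expect
        exact Finset.sum_le_sum fun x _ => mul_le_mul_of_nonneg_left (key x) (hD0 x)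
    _ = expect D (fun x => (g x - h x) ^ 2)
        - 2 * ε * expect D (fun x => f x * (g x - h x)) + ε ^ 2 + 2 * ε' := by
        unfold expect
        have e : ∀ x ∈ Finset.univ, D x * ((g x - h x)^2 - 2*ε*(f x*(g x-h x)) + ε^2 + 2*ε')
            = D x * (g x - h x)^2 - 2*ε*(D x * (f x*(g x-h x))) + (ε^2+2*ε')*D x :=
          fun x _ => by ring
        rw [Finset.sum_congr rfl e, Finset.sum_add_distrib, Finset.sum_sub_distrib,
          ← Finset.mul_sum, ← Finset.mul_sum, hD1]
        ring_nf
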